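/- arXiv:2209.08811 — 9 statements merged into one kernel-verified Lean document; each statement's English description precedes it below -/
import Mathlib

section
/- Let u_ρ ∈ V be a solution of the regularized variational problem with target ū ∈ H, and assume the target is regular, i.e., ū = ι w̄ for some w̄ ∈ V. Then the energy seminorm estimate ‖u_ρ − w̄‖_a ≤ ‖w̄‖_a holds. -/
open scoped RealInnerProductSpace

/-- Cauchy–Schwarz for a positive semidefinite symmetric bilinear form. -/
lemma cs_aux {V : Type*} [NormedAddCommGroup V] [InnerProductSpace ℝ V]
    (a : V →L[ℝ] V →L[ℝ] ℝ)
    (hsym : ∀ u v : V, a u v = a v u)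
    (hpos : ∀ v : V, 0 ≤ a v v) (x y : V) :
    (a x y) ^ 2 ≤ a x x * a y y := by
  have key : ∀ t : ℝ, 0 ≤ a y y * t * t + (2 * a x y) * t + a x x := by
    intro t
    have := hpos (x + t • y)
    have expand : a (x + t • y) (x + t • y)
        = a y y * t * t + (2 * a x y) * t + a x x := by
      simp [map_add, map_smul, hsym y x]
      ring
    linarith [expand ▸ this]
  by_cases hy : a y y = 0
  · -- then a x y must be 0 (else linear term dominates)
    have hxy : a x y = 0 := by
      by_contra h
      have h1 := key (-(a x x + 1) / (2 * a x y))
      have h2 := key 0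
      rw [hy] at h1
      have h2xy : (2 : ℝ) * a x y ≠ 0 := by positivity
      have h3 : 2 * a x y * (-(a x x + 1) / (2 * a x y)) = -(a x x + 1) := by field_simp
      simp only [zero_mul, zero_add, h3] at h1
      rcases mul_pos_iff.mp (by nlinarith : (0:ℝ) < (2 * a x y) * (2 * a x y)) with ⟨hp,_⟩|⟨hn,_⟩ <;> nlinarith [key ((-(a x x + 1)) / (2 * a x y)), mul_div_cancel₀ (-(a x x + 1)) h2xy]
    rw [hxy, hy]
    simp [hpos x]
  · have hy' : 0 < a y y := lt_of_le_of_ne (hpos y) (Ne.symm hy)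
    have hd : discrim (a y y) (2 * a x y) (a x x) ≤ 0 := discrim_le_zero (fun t => by linarith [key t])
    unfold discrim at hd
    nlinarith

/-- If the target is regular, `ū = ι w̄` with `w̄ ∈ V`, then the
solution `uρ` of the regularized variational problem satisfies the energy
seminorm estimate `‖uρ − w̄‖_a ≤ ‖w̄‖_a`, where `‖v‖_a = √(a(v,v))`. -/
theorem stmt_1
    {V H : Type*}
    [NormedAddCommGroup V] [InnerProductSpace ℝ V] [CompleteSpace V]
    [NormedAddCommGroup H] [InnerProductSpace ℝ H] [CompleteSpace H]
    (ι : V →L[ℝ] H) (hι : Function.Injective ι)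
    (a : V →L[ℝ] V →L[ℝ] ℝ)
    (hsym : ∀ u v : V, a u v = a v u)
    (hpos : ∀ v : V, 0 ≤ a v v)
    (ubar : H) (uρ : V)
    (hsol : ∀ v : V, a uρ v + ⟪ι uρ, ι v⟫ = ⟪ubar, ι v⟫)
    (wbar : V) (hreg : ubar = ι wbar) :
    Real.sqrt (a (uρ - wbar) (uρ - wbar)) ≤ Real.sqrt (a wbar wbar) := by
  set e := uρ - wbar with he
  have hse := hsol e
  rw [hreg] at hse
  have hιe : ι uρ - ι wbar = ι e := by rw [he]; simp
  have hA : a uρ e = -‖ι e‖ ^ 2 := by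
    have : ⟪ι wbar, ι e⟫ - ⟪ι uρ, ι e⟫ = -⟪ι e, ι e⟫ := by
      rw [← inner_sub_left, ← hιe, ← neg_sub (ι uρ), inner_neg_left]
    rw [real_inner_self_eq_norm_sq] at this
    linarith
  have hee : a e e ≤ -(a wbar e) := by
    have : a e e = a uρ e - a wbar e := by
      rw [he]; simp [map_sub, hsym]
    rw [this, hA]
    nlinarith [sq_nonneg ‖ι e‖]
  have hcs : (a wbar e) ^ 2 ≤ a wbar wbar * a e e := cs_aux a hsym hpos wbar e
  -- conclude a e e ≤ a wbar wbar is not direct; use sqrt argument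
  have hle : a e e ≤ Real.sqrt (a wbar wbar) * Real.sqrt (a e e) := by
    calc a e e ≤ -(a wbar e) := hee
    _ ≤ |a wbar e| := neg_le_abs _
    _ = Real.sqrt ((a wbar e) ^ 2) := (Real.sqrt_sq_eq_abs _).symm
    _ ≤ Real.sqrt (a wbar wbar * a e e) := Real.sqrt_le_sqrt hcs
    _ = Real.sqrt (a wbar wbar) * Real.sqrt (a e e) := Real.sqrt_mul (hpos wbar) _
  by_cases h0 : Real.sqrt (a e e) = 0
  · rw [h0]; exact Real.sqrt_nonneg _
  · have hpos' : 0 < Real.sqrt (a e e) :=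
      lt_of_le_of_ne (Real.sqrt_nonneg _) (Ne.symm h0)
    have hsq : Real.sqrt (a e e) * Real.sqrt (a e e) = a e e :=
      Real.mul_self_sqrt (hpos e)
    nlinarith
end

section
/- Let u_ρ ∈ V be a solution of the regularized variational problem with target ū ∈ H, and assume ū = ι w̄ for some w̄ ∈ V. Then ‖ι u_ρ − ū‖_H ≤ ‖w̄‖_a, i.e., the L²-type error is bounded by the energy seminorm of the target. -/
open scoped RealInnerProductSpace

/-- If the target is regular, `ū = ι w̄` with `w̄ ∈ V`, then the
solution `uρ` of the regularized variational problem satisfies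
`‖ι uρ − ū‖_H ≤ ‖w̄‖_a`, where `‖v‖_a = √(a(v,v))`. -/
theorem stmt_2
    {V H : Type*}
    [NormedAddCommGroup V] [InnerProductSpace ℝ V] [CompleteSpace V]
    [NormedAddCommGroup H] [InnerProductSpace ℝ H] [CompleteSpace H]
    (ι : V →L[ℝ] H) (hι : Function.Injective ι)
    (a : V →L[ℝ] V →L[ℝ] ℝ)
    (hsym : ∀ u v : V, a u v = a v u)
    (hpos : ∀ v : V, 0 ≤ a v v)
    (ubar : H) (uρ : V)
    (hsol : ∀ v : V, a uρ v + ⟪ι uρ, ι v⟫ = ⟪ubar, ι v⟫)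
    (wbar : V) (hreg : ubar = ι wbar) :
    ‖ι uρ - ubar‖ ≤ Real.sqrt (a wbar wbar) := by
  have h1 := hsol (uρ - wbar)
  have hsub : ι uρ - ubar = ι (uρ - wbar) := by rw [hreg, map_sub]
  have hsq : ‖ι uρ - ubar‖ ^ 2 = a uρ wbar - a uρ uρ := by
    rw [hsub, ← real_inner_self_eq_norm_sq]
    have : ⟪ι (uρ - wbar), ι (uρ - wbar)⟫ = ⟪ι uρ, ι (uρ - wbar)⟫ - ⟪ι wbar, ι (uρ - wbar)⟫ := by
      rw [map_sub, inner_sub_left]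
    rw [this]
    rw [hreg] at h1
    have h2 : ⟪ι uρ, ι (uρ - wbar)⟫ - ⟪ι wbar, ι (uρ - wbar)⟫ = - a uρ (uρ - wbar) := by
      linarith
    rw [h2, map_sub]
    ring
  have hpos' := hpos (uρ - wbar)
  have hexp : a (uρ - wbar) (uρ - wbar)
      = a uρ uρ - a uρ wbar - a wbar uρ + a wbar wbar := by
    rw [map_sub]
    simp [map_sub, ContinuousLinearMap.sub_apply]
    ring
  have hsymm := hsym uρ wbar
  have hb : ‖ι uρ - ubar‖ ^ 2 ≤ a wbar wbar := by
    rw [hsq]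
    nlinarith [hpos uρ, hpos wbar]
  have := Real.sqrt_le_sqrt hb
  rwa [Real.sqrt_sq (norm_nonneg _)] at this
end

section
/- Let u_ρ ∈ V be a solution of the regularized variational problem with target ū ∈ H. Assume ū = ι w̄ for some w̄ ∈ V, and that there exists g ∈ H with a(w̄, v) = ⟨g, ι v⟩_H for all v ∈ V (i.e., S_ρ ū ∈ L²(Ω) in the concrete setting). Then ‖ι u_ρ − ū‖_H ≤ ‖g‖_H. -/
open scoped RealInnerProductSpace

/-- If `ū = ι w̄` with `w̄ ∈ V` and there is `g ∈ H` with
`a(w̄, v) = ⟨g, ι v⟩_H` for all `v ∈ V` (i.e. `S_ρ ū ∈ L²(Ω)`), then the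
solution `uρ` of the regularized variational problem satisfies
`‖ι uρ − ū‖_H ≤ ‖g‖_H`. -/
theorem stmt_3
    {V H : Type*}
    [NormedAddCommGroup V] [InnerProductSpace ℝ V] [CompleteSpace V]
    [NormedAddCommGroup H] [InnerProductSpace ℝ H] [CompleteSpace H]
    (ι : V →L[ℝ] H) (hι : Function.Injective ι)
    (a : V →L[ℝ] V →L[ℝ] ℝ)
    (hsym : ∀ u v : V, a u v = a v u)
    (hpos : ∀ v : V, 0 ≤ a v v)
    (ubar : H) (uρ : V)
    (hsol : ∀ v : V, a uρ v + ⟪ι uρ, ι v⟫ = ⟪ubar, ι v⟫)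
    (wbar : V) (hreg : ubar = ι wbar)
    (g : H) (hg : ∀ v : V, a wbar v = ⟪g, ι v⟫) :
    ‖ι uρ - ubar‖ ≤ ‖g‖ := by
  set e := uρ - wbar with he
  have hιe : ι uρ - ubar = ι e := by
    rw [hreg, he, map_sub]
  have key : a e e + ⟪ι e, ι e⟫ = -⟪g, ι e⟫ := by
    have h1 := hsol e
    rw [hreg] at h1
    have h2 := hg e
    have hae : a e e = a uρ e - a wbar e := by
      simp only [he, map_sub, ContinuousLinearMap.sub_apply]; ring
    have hie : ⟪ι e, ι e⟫ = ⟪ι uρ, ι e⟫ - ⟪ι wbar, ι e⟫ := by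
      rw [he, map_sub, inner_sub_left]
    linarith
  have hn : ‖ι e‖^2 ≤ ‖g‖ * ‖ι e‖ := by
    have h1 : ⟪ι e, ι e⟫ ≤ -⟪g, ι e⟫ := by
      have := hpos e; linarith
    have h2 : -⟪g, ι e⟫ ≤ ‖g‖ * ‖ι e‖ := by
      have := abs_real_inner_le_norm g (ι e)
      have := neg_le_abs (⟪g, ι e⟫)
      linarith [abs_real_inner_le_norm g (ι e), neg_le_abs (⟪g, ι e⟫)]
    calc ‖ι e‖^2 = ⟪ι e, ι e⟫ := (real_inner_self_eq_norm_sq _).symm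
      _ ≤ -⟪g, ι e⟫ := h1
      _ ≤ ‖g‖ * ‖ι e‖ := h2
  rw [hιe]
  rcases eq_or_lt_of_le (norm_nonneg (ι e)) with h | h
  · rw [← h]; exact norm_nonneg g
  · nlinarith [hn]
end

section
/- Let u_ρ ∈ V be a solution of the regularized variational problem with target ū ∈ H. Assume ū = ι w̄ for some w̄ ∈ V, and that there exists g ∈ H with a(w̄, v) = ⟨g, ι v⟩_H for all v ∈ V. Then the energy seminorm estimate ‖u_ρ − w̄‖_a ≤ ‖g‖_H holds. -/
open scoped RealInnerProductSpace

/-- If `ū = ι w̄` with `w̄ ∈ V` and there is `g ∈ H` with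
`a(w̄, v) = ⟨g, ι v⟩_H` for all `v ∈ V`, then the solution `uρ` of the
regularized variational problem satisfies the energy seminorm estimate
`‖uρ − w̄‖_a ≤ ‖g‖_H`, where `‖v‖_a = √(a(v,v))`. -/
theorem stmt_4
    {V H : Type*}
    [NormedAddCommGroup V] [InnerProductSpace ℝ V] [CompleteSpace V]
    [NormedAddCommGroup H] [InnerProductSpace ℝ H] [CompleteSpace H]
    (ι : V →L[ℝ] H) (hι : Function.Injective ι)
    (a : V →L[ℝ] V →L[ℝ] ℝ)
    (hsym : ∀ u v : V, a u v = a v u)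
    (hpos : ∀ v : V, 0 ≤ a v v)
    (ubar : H) (uρ : V)
    (hsol : ∀ v : V, a uρ v + ⟪ι uρ, ι v⟫ = ⟪ubar, ι v⟫)
    (wbar : V) (hreg : ubar = ι wbar)
    (g : H) (hg : ∀ v : V, a wbar v = ⟪g, ι v⟫) :
    Real.sqrt (a (uρ - wbar) (uρ - wbar)) ≤ ‖g‖ := by
  set e := uρ - wbar with he
  have h1 : a uρ e = ⟪ι wbar - ι uρ, ι e⟫ := by
    have := hsol e
    rw [hreg] at this
    rw [inner_sub_left]
    linarith
  have h2 : ι wbar - ι uρ = -ι e := by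
    simp [he, map_sub]
  have key : a e e = -‖ι e‖ ^ 2 - ⟪g, ι e⟫ := by
    have : a e e = a uρ e - a wbar e := by
      simp only [he, map_sub, ContinuousLinearMap.sub_apply]
      linarith [hsym uρ wbar]
    rw [this, h1, h2, hg, inner_neg_left, real_inner_self_eq_norm_sq]
  have hcs : -⟪g, ι e⟫ ≤ ‖g‖ * ‖ι e‖ := by
    have := abs_real_inner_le_norm g (ι e)
    have := neg_abs_le (⟪g, ι e⟫)
    linarith
  have hbound : a e e ≤ ‖g‖ ^ 2 := by
    nlinarith [sq_nonneg (‖g‖ - ‖ι e‖), norm_nonneg (ι e), norm_nonneg g]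
  calc Real.sqrt (a e e) ≤ Real.sqrt (‖g‖ ^ 2) := Real.sqrt_le_sqrt hbound
    _ = ‖g‖ := Real.sqrt_sq (norm_nonneg g)
end

section
/- Let u_ρ ∈ V be a solution of the regularized variational problem with target ū ∈ H, let V_h ⊆ V be a closed subspace, and let u_{ρh} ∈ V_h be a Galerkin solution. Assume ū = ι w̄ for some w̄ ∈ V. Then for every v_h ∈ V_h: ‖ι(u_ρ − u_{ρh})‖_H² ≤ 2 [ ‖u_ρ − w̄‖_a² + ‖ι u_ρ − ū‖_H² + ‖w̄ − v_h‖_a² + ‖ι(w̄ − v_h)‖_H² ]. -/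
open scoped RealInnerProductSpace

/-- for the continuous solution `uρ`, a Galerkin solution
`uρh ∈ V_h`, and a regular target `ū = ι w̄`, for every `v_h ∈ V_h`:
`‖ι(uρ − uρh)‖² ≤ 2[‖uρ − w̄‖_a² + ‖ι uρ − ū‖² + ‖w̄ − v_h‖_a² + ‖ι(w̄ − v_h)‖²]`. -/
theorem stmt_7
    {V H : Type*}
    [NormedAddCommGroup V] [InnerProductSpace ℝ V] [CompleteSpace V]
    [NormedAddCommGroup H] [InnerProductSpace ℝ H] [CompleteSpace H]
    (ι : V →L[ℝ] H) (hι : Function.Injective ι)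
    (a : V →L[ℝ] V →L[ℝ] ℝ)
    (hsym : ∀ u v : V, a u v = a v u)
    (hpos : ∀ v : V, 0 ≤ a v v)
    (ubar : H) (uρ : V)
    (hsol : ∀ v : V, a uρ v + ⟪ι uρ, ι v⟫ = ⟪ubar, ι v⟫)
    (Vh : Submodule ℝ V) (hVh : IsClosed (Vh : Set V))
    (uρh : V) (huρh : uρh ∈ Vh)
    (hGal : ∀ vh ∈ Vh, a uρh vh + ⟪ι uρh, ι vh⟫ = ⟪ubar, ι vh⟫)
    (wbar : V) (hreg : ubar = ι wbar) :
    ∀ vh ∈ Vh,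
      ‖ι (uρ - uρh)‖ ^ 2 ≤
        2 * (a (uρ - wbar) (uρ - wbar) + ‖ι uρ - ubar‖ ^ 2 +
          a (wbar - vh) (wbar - vh) + ‖ι (wbar - vh)‖ ^ 2) := by
  intro vh hvh
  set b : V → V → ℝ := fun u v => a u v + ⟪ι u, ι v⟫ with hb
  have bsym : ∀ u v, b u v = b v u := fun u v => by
    simp only [hb, hsym u v, real_inner_comm]
  have bsubr : ∀ u v w, b u (v - w) = b u v - b u w := fun u v w => by
    simp only [hb, map_sub, inner_sub_right]; ring
  have baddr : ∀ u v w, b u (v + w) = b u v + b u w := fun u v w => by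
    simp only [hb, map_add, inner_add_right]; ring
  have bsubl : ∀ u v w, b (u - v) w = b u w - b v w := fun u v w => by
    simp only [hb, map_sub, ContinuousLinearMap.sub_apply, inner_sub_left]; ring
  have baddl : ∀ u v w, b (u + v) w = b u w + b v w := fun u v w => by
    simp only [hb, map_add, ContinuousLinearMap.add_apply, inner_add_left]; ring
  have bpos : ∀ v, 0 ≤ b v v := fun v =>
    add_nonneg (hpos v) real_inner_self_nonneg
  have horth0 : ∀ z ∈ Vh, b (uρ - uρh) z = 0 := by
    intro z hz
    have h1 := hsol z
    have h2 := hGal z hz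
    simp only [hb, map_sub, ContinuousLinearMap.sub_apply, inner_sub_left]
    linarith
  obtain ⟨e, he⟩ : ∃ y, y = uρ - uρh := ⟨_, rfl⟩
  obtain ⟨p, hp⟩ : ∃ y, y = uρ - wbar := ⟨_, rfl⟩
  obtain ⟨q, hq⟩ : ∃ y, y = wbar - vh := ⟨_, rfl⟩
  obtain ⟨x, hxdef⟩ : ∃ y, y = uρ - vh := ⟨_, rfl⟩
  rw [← he, ← hp, ← hq]
  have horth : ∀ z ∈ Vh, b e z = 0 := he ▸ horth0
  have hx : x = p + q := by rw [hxdef, hp, hq]; abel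
  have hbe : b e e = b e x := by
    have hxe : x = e + (uρh - vh) := by rw [hxdef, he]; abel
    rw [hxe, baddr, horth _ (Vh.sub_mem huρh hvh), add_zero]
  have h1 : b e e ≤ b x x := by
    have h0 := bpos (e - x)
    have hexp : b (e - x) (e - x) = b e e - 2 * b e x + b x x := by
      rw [bsubl, bsubr, bsubr, bsym x e]; ring
    linarith [hexp, hbe, h0]
  have h2 : b x x ≤ 2 * (b p p + b q q) := by
    have h0 := bpos (p - q)
    have hexp : b (p - q) (p - q) = b p p - 2 * b p q + b q q := by
      rw [bsubl, bsubr, bsubr, bsym q p]; ring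
    have hexp2 : b x x = b p p + 2 * b p q + b q q := by
      rw [hx, baddl, baddr, baddr, bsym q p]; ring
    linarith
  have hιe : ‖ι e‖ ^ 2 ≤ b e e := by
    have : b e e = a e e + ‖ι e‖ ^ 2 := by
      simp only [hb, real_inner_self_eq_norm_sq]
    linarith [hpos e]
  have hιp : ι p = ι uρ - ubar := by rw [hp, map_sub, hreg]
  have hbp : b p p = a p p + ‖ι uρ - ubar‖ ^ 2 := by
    simp only [hb, hιp, real_inner_self_eq_norm_sq]
  have hbq : b q q = a q q + ‖ι q‖ ^ 2 := by
    simp only [hb, real_inner_self_eq_norm_sq]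
  linarith
end

section
/- Let u_ρ ∈ V be a solution of the regularized variational problem with target ū ∈ H, let V_h ⊆ V be a closed subspace, and let u_{ρh} ∈ V_h be a Galerkin solution. Assume ū = ι w̄ for some w̄ ∈ V. Then the Galerkin error satisfies, for every v_h ∈ V_h: ‖ι(u_ρ − u_{ρh})‖_H² ≤ 2 [ 2‖w̄‖_a² + ‖w̄ − v_h‖_a² + ‖ι(w̄ − v_h)‖_H² ]. -/
open scoped RealInnerProductSpace

/-- for the continuous solution `uρ`, a Galerkin solution
`uρh ∈ V_h`, and a regular target `ū = ι w̄`, the Galerkin error satisfies, for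
every `v_h ∈ V_h`:
`‖ι(uρ − uρh)‖² ≤ 2[2‖w̄‖_a² + ‖w̄ − v_h‖_a² + ‖ι(w̄ − v_h)‖²]`. -/
theorem stmt_8
    {V H : Type*}
    [NormedAddCommGroup V] [InnerProductSpace ℝ V] [CompleteSpace V]
    [NormedAddCommGroup H] [InnerProductSpace ℝ H] [CompleteSpace H]
    (ι : V →L[ℝ] H) (hι : Function.Injective ι)
    (a : V →L[ℝ] V →L[ℝ] ℝ)
    (hsym : ∀ u v : V, a u v = a v u)
    (hpos : ∀ v : V, 0 ≤ a v v)
    (ubar : H) (uρ : V)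
    (hsol : ∀ v : V, a uρ v + ⟪ι uρ, ι v⟫ = ⟪ubar, ι v⟫)
    (Vh : Submodule ℝ V) (hVh : IsClosed (Vh : Set V))
    (uρh : V) (huρh : uρh ∈ Vh)
    (hGal : ∀ vh ∈ Vh, a uρh vh + ⟪ι uρh, ι vh⟫ = ⟪ubar, ι vh⟫)
    (wbar : V) (hreg : ubar = ι wbar) :
    ∀ vh ∈ Vh,
      ‖ι (uρ - uρh)‖ ^ 2 ≤
        2 * (2 * a wbar wbar + a (wbar - vh) (wbar - vh) +
          ‖ι (wbar - vh)‖ ^ 2) := by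
  intro vh hvh
  -- generic expansion lemmas for the bilinear form
  have asub : ∀ x y z : V, a (x - y) z = a x z - a y z := by
    intro x y z; rw [map_sub]; rfl
  have asub' : ∀ x y z : V, a x (y - z) = a x y - a x z := fun x y z =>
    map_sub (a x) y z
  have aadd : ∀ x y z : V, a (x + y) z = a x z + a y z := by
    intro x y z; rw [map_add]; rfl
  have aadd' : ∀ x y z : V, a x (y + z) = a x y + a x z := fun x y z =>
    map_add (a x) y z
  have expand_sub : ∀ x y : V,
      a (x - y) (x - y) = a x x - a x y - a y x + a y y := by
    intro x y; rw [asub, asub', asub']; ring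
  have expand_add : ∀ x y : V,
      a (x + y) (x + y) = a x x + a x y + a y x + a y y := by
    intro x y; rw [aadd, aadd', aadd']; ring
  set e := uρ - uρh with he
  set d := uρ - vh with hd
  set p := uρ - wbar with hp
  set q := wbar - vh with hq
  -- Galerkin orthogonality
  have orth : ∀ wh ∈ Vh, a e wh + ⟪ι e, ι wh⟫ = 0 := by
    intro wh hwh
    have h1 := hsol wh
    have h2 := hGal wh hwh
    have hae : a e wh = a uρ wh - a uρh wh := asub _ _ _
    have hie : ι e = ι uρ - ι uρh := map_sub ι _ _
    rw [hae, hie, inner_sub_left]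
    linarith
  -- d = e + (uρh - vh)
  have hdec : d = e + (uρh - vh) := by rw [hd, he]; abel
  have hmem : uρh - vh ∈ Vh := sub_mem huρh hvh
  have horth := orth (uρh - vh) hmem
  -- the energy identity: a e e + ‖ι e‖² = a e d + ⟪ι e, ι d⟫
  have hEid : a e e + ‖ι e‖ ^ 2 = a e d + ⟪ι e, ι d⟫ := by
    have h1 : a e d = a e e + a e (uρh - vh) := by rw [hdec, aadd']
    have h2 : ⟪ι e, ι d⟫ = ⟪ι e, ι e⟫ + ⟪ι e, ι (uρh - vh)⟫ := by
      rw [hdec, map_add, inner_add_right]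
    have h3 : ⟪ι e, ι e⟫ = ‖ι e‖ ^ 2 := real_inner_self_eq_norm_sq _
    linarith [horth]
  -- Young-type bounds
  have haed : 2 * a e d ≤ a e e + a d d := by
    have h := hpos (e - d)
    have hx := expand_sub e d
    have hsy : a e d = a d e := hsym _ _
    linarith
  have hied : 2 * ⟪ι e, ι d⟫ ≤ ‖ι e‖ ^ 2 + ‖ι d‖ ^ 2 := by
    have h := sq_nonneg ‖ι e - ι d‖
    have hx : ‖ι e - ι d‖ ^ 2 = ‖ι e‖ ^ 2 - 2 * ⟪ι e, ι d⟫ + ‖ι d‖ ^ 2 :=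
      norm_sub_sq_real _ _
    linarith
  have hE : ‖ι e‖ ^ 2 ≤ a d d + ‖ι d‖ ^ 2 := by
    have := hpos e
    linarith
  -- split d = p + q
  have hdpq : d = p + q := by rw [hd, hp, hq]; abel
  have hadd : a d d ≤ 2 * a p p + 2 * a q q := by
    have h := hpos (p - q)
    have hx := expand_sub p q
    have hy : a d d = a p p + a p q + a q p + a q q := by
      rw [hdpq]; exact expand_add p q
    linarith
  have hidd : ‖ι d‖ ^ 2 ≤ 2 * ‖ι p‖ ^ 2 + 2 * ‖ι q‖ ^ 2 := by
    have h := sq_nonneg ‖ι p - ι q‖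
    have hx : ‖ι p - ι q‖ ^ 2 = ‖ι p‖ ^ 2 - 2 * ⟪ι p, ι q⟫ + ‖ι q‖ ^ 2 :=
      norm_sub_sq_real _ _
    have hy : ‖ι d‖ ^ 2 = ‖ι p‖ ^ 2 + 2 * ⟪ι p, ι q⟫ + ‖ι q‖ ^ 2 := by
      rw [hdpq, map_add]; exact norm_add_sq_real _ _
    linarith
  -- regularity estimates
  have hreg1 : a uρ p = a uρ uρ - a uρ wbar := asub' _ _ _
  have hreg2 : a uρ p = -‖ι p‖ ^ 2 := by
    have h := hsol p
    rw [hreg] at h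
    have hip : ι p = ι uρ - ι wbar := map_sub ι _ _
    have h2 : ⟪ι wbar, ι p⟫ - ⟪ι uρ, ι p⟫ = -‖ι p‖ ^ 2 := by
      rw [← inner_sub_left, ← neg_sub (ι uρ) (ι wbar), ← hip, inner_neg_left,
        real_inner_self_eq_norm_sq]
    linarith
  have hK : ‖ι p‖ ^ 2 = a uρ wbar - a uρ uρ := by linarith
  have happ : a p p = a uρ uρ - 2 * a uρ wbar + a wbar wbar := by
    have hs : a wbar uρ = a uρ wbar := hsym _ _
    have := expand_sub uρ wbar
    rw [hp]; linarith
  have hA := hpos uρ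
  have hC := hpos wbar
  have hPP := hpos p
  have hKnn : 0 ≤ ‖ι p‖ ^ 2 := sq_nonneg _
  have happ_le : a p p ≤ a wbar wbar := by linarith
  have hip_le : ‖ι p‖ ^ 2 ≤ a wbar wbar := by linarith
  -- combine
  have hQ := hpos q
  have hQn := sq_nonneg ‖ι q‖
  have hfinal : ‖ι e‖ ^ 2 ≤
      2 * (2 * a wbar wbar + a q q + ‖ι q‖ ^ 2) := by linarith
  simpa [hq, he] using hfinal
end

section
/- (Stability of the perturbed Galerkin scheme.) Let a and ã be two continuous symmetric bilinear forms on V, with ã positive semidefinite. Let V_h ⊆ V be a closed subspace, ū ∈ H, and let u_{ρh}, ũ_{ρh} ∈ V_h satisfy a(u_{ρh}, v_h) + ⟨ι u_{ρh}, ι v_h⟩_H = ⟨ū, ι v_h⟩_H and ã(ũ_{ρh}, v_h) + ⟨ι ũ_{ρh}, ι v_h⟩_H = ⟨ū, ι v_h⟩_H for all v_h ∈ V_h. Then ‖ι(ũ_{ρh} − u_{ρh})‖_H² ≤ a(u_{ρh}, ũ_{ρh} − u_{ρh}) − ã(u_{ρh}, ũ_{ρh} − u_{ρh}). -/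
open scoped RealInnerProductSpace

/-- Stability of the perturbed Galerkin scheme: if `uρh` is the
Galerkin solution for the exact bilinear form `a` and `ũρh` the Galerkin
solution for the perturbed (positive semidefinite) bilinear form `ã`, both in
the closed subspace `V_h`, then
`‖ι(ũρh − uρh)‖² ≤ a(uρh, ũρh − uρh) − ã(uρh, ũρh − uρh)`. -/
theorem stmt_9
    {V H : Type*}
    [NormedAddCommGroup V] [InnerProductSpace ℝ V] [CompleteSpace V]
    [NormedAddCommGroup H] [InnerProductSpace ℝ H] [CompleteSpace H]
    (ι : V →L[ℝ] H) (hι : Function.Injective ι)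
    (a atil : V →L[ℝ] V →L[ℝ] ℝ)
    (hasym : ∀ u v : V, a u v = a v u)
    (hatilsym : ∀ u v : V, atil u v = atil v u)
    (hatilpos : ∀ v : V, 0 ≤ atil v v)
    (Vh : Submodule ℝ V) (hVh : IsClosed (Vh : Set V))
    (ubar : H)
    (uρh : V) (huρh : uρh ∈ Vh)
    (util : V) (hutil : util ∈ Vh)
    (hGal : ∀ vh ∈ Vh, a uρh vh + ⟪ι uρh, ι vh⟫ = ⟪ubar, ι vh⟫)
    (hGaltil : ∀ vh ∈ Vh, atil util vh + ⟪ι util, ι vh⟫ = ⟪ubar, ι vh⟫) :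
    ‖ι (util - uρh)‖ ^ 2 ≤
      a uρh (util - uρh) - atil uρh (util - uρh) := by
  set e := util - uρh with he
  have heVh : e ∈ Vh := Vh.sub_mem hutil huρh
  have h1 := hGal e heVh
  have h2 := hGaltil e heVh
  have key : ⟪ι e, ι e⟫ = a uρh e - atil util e := by
    have h3 : ⟪ι e, ι e⟫ = ⟪ι util, ι e⟫ - ⟪ι uρh, ι e⟫ := by
      rw [show ι e = ι util - ι uρh from by rw [he, map_sub], inner_sub_left]
    linarith [h1, h2, h3]
  have hsplit : atil util e = atil uρh e + atil e e := by
    have : util = uρh + e := by rw [he]; abel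
    rw [this, map_add]; rfl
  have hnorm : ‖ι e‖ ^ 2 = ⟪ι e, ι e⟫ := (real_inner_self_eq_norm_sq _).symm
  rw [hnorm, key, hsplit]
  linarith [hatilpos e]
end

section
/- Let W be a real Hilbert space and T : W → W a bounded self-adjoint linear operator that is positive (⟨Tw, w⟩ ≥ 0 for all w) and boundedly invertible. Let V ⊆ W be a subspace, u ∈ W, and p ∈ V satisfy the variational identity ⟨T p, v⟩ = ⟨u, v⟩ for all v ∈ V. Then ⟨T p, p⟩ ≤ ⟨T⁻¹ u, u⟩. -/
open scoped RealInnerProductSpace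

/-- let `T : W → W` be a bounded, self-adjoint, positive and
boundedly invertible linear operator on a real Hilbert space `W` (formalized as
a continuous linear equivalence, so that `T⁻¹ = T.symm` is bounded as well).
If `p` lies in a subspace `V ⊆ W` and satisfies `⟨T p, v⟩ = ⟨u, v⟩` for all
`v ∈ V`, then `⟨T p, p⟩ ≤ ⟨T⁻¹ u, u⟩`. -/
theorem stmt_10
    {W : Type*} [NormedAddCommGroup W] [InnerProductSpace ℝ W] [CompleteSpace W]
    (T : W ≃L[ℝ] W)
    (hself : ∀ x y : W, ⟪T x, y⟫ = ⟪x, T y⟫)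
    (hpos : ∀ w : W, 0 ≤ ⟪T w, w⟫)
    (Vs : Submodule ℝ W)
    (u : W) (p : W) (hp : p ∈ Vs)
    (hvar : ∀ v ∈ Vs, ⟪T p, v⟫ = ⟪u, v⟫) :
    ⟪T p, p⟫ ≤ ⟪T.symm u, u⟫ := by
  set q := T.symm u with hqdef
  have hq : T q = u := T.apply_symm_apply u
  have h1 : ⟪T p, p⟫ = ⟪u, p⟫ := hvar p hp
  have h2 : ⟪T q, q⟫ = ⟪q, u⟫ := by rw [hq, real_inner_comm]
  have h3 : ⟪T q, p⟫ = ⟪u, p⟫ := by rw [hq]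
  have h4 : ⟪T p, q⟫ = ⟪u, p⟫ := by
    rw [hself, hq, real_inner_comm]
  have key := hpos (q - p)
  have expand : ⟪T (q - p), q - p⟫ =
      ⟪T q, q⟫ - ⟪T q, p⟫ - ⟪T p, q⟫ + ⟪T p, p⟫ := by
    rw [map_sub, inner_sub_left, inner_sub_right, inner_sub_right]
    ring
  rw [expand, h1, h2, h3, h4] at key
  have : ⟪q, u⟫ = ⟪T.symm u, u⟫ := by rw [hqdef]
  linarith [key, this, h1]
end

section
/- (Positivity of the Bramble–Pasciak transformed system matrix.) Let K_ρ, C, M be symmetric positive definite real N×N matrices and K a symmetric real N×N matrix, and assume that K_ρ − C is positive definite. Then the block matrix 𝒦 = [[(K_ρ − C) C⁻¹ K_ρ, (K_ρ − C) C⁻¹ K], [K C⁻¹ (K_ρ − C), K C⁻¹ K + M]] (of size 2N × 2N) is symmetric positive definite. -/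
open Matrix

lemma posDef_fromBlocks_diag {n : Type*} [Fintype n] [DecidableEq n]
    {A B : Matrix n n ℝ} (hA : A.PosDef) (hB : B.PosDef) :
    (Matrix.fromBlocks A 0 0 B).PosDef := by
  rw [Matrix.posDef_iff_dotProduct_mulVec]
  constructor
  · unfold Matrix.IsHermitian
    rw [Matrix.fromBlocks_conjTranspose, hA.1.eq, hB.1.eq]
    simp
  · intro x hx
    rw [Matrix.fromBlocks_mulVec]
    have hdot : star x ⬝ᵥ Sum.elim (A *ᵥ (x ∘ Sum.inl) + 0 *ᵥ (x ∘ Sum.inr))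
        (0 *ᵥ (x ∘ Sum.inl) + B *ᵥ (x ∘ Sum.inr)) =
        star (x ∘ Sum.inl) ⬝ᵥ (A *ᵥ (x ∘ Sum.inl)) +
        star (x ∘ Sum.inr) ⬝ᵥ (B *ᵥ (x ∘ Sum.inr)) := by
      simp [dotProduct, Fintype.sum_sum_type]
    rw [hdot]
    rcases (by
      by_contra h
      push_neg at h
      apply hx
      ext (i | i)
      · exact congrFun h.1 i
      · exact congrFun h.2 i : x ∘ Sum.inl ≠ 0 ∨ x ∘ Sum.inr ≠ 0) with h | h
    · exact add_pos_of_pos_of_nonneg (hA.dotProduct_mulVec_pos h) (hB.posSemidef.dotProduct_mulVec_nonneg _)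
    · exact add_pos_of_nonneg_of_pos (hA.posSemidef.dotProduct_mulVec_nonneg _) (hB.dotProduct_mulVec_pos h)

/-- Positivity of the Bramble–Pasciak transformed system matrix:
if `K_ρ`, `C`, `M` are symmetric positive definite real `N×N` matrices, `K` is
symmetric, and `K_ρ − C` is positive definite, then the `2N×2N` block matrix
`𝒦 = [[(K_ρ−C)C⁻¹K_ρ, (K_ρ−C)C⁻¹K], [KC⁻¹(K_ρ−C), KC⁻¹K + M]]` is symmetric
positive definite. -/
theorem stmt_15
    (N : ℕ) (Kρ C M K : Matrix (Fin N) (Fin N) ℝ)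
    (hKρ : Kρ.PosDef) (hC : C.PosDef) (hM : M.PosDef) (hK : K.IsSymm)
    (hKρC : (Kρ - C).PosDef) :
    (Matrix.fromBlocks
      ((Kρ - C) * C⁻¹ * Kρ) ((Kρ - C) * C⁻¹ * K)
      (K * C⁻¹ * (Kρ - C)) (K * C⁻¹ * K + M)).PosDef := by
  set D := Kρ - C with hD
  have hCinv : Invertible C := hC.isUnit.invertible
  have hDsymm : Dᴴ = D := hKρC.1.eq
  have hKsymm : Kᴴ = K := by
    rw [Matrix.conjTranspose_eq_transpose_of_trivial, hK.eq]
  -- key decomposition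
  have key : Matrix.fromBlocks (D * C⁻¹ * Kρ) (D * C⁻¹ * K) (K * C⁻¹ * D) (K * C⁻¹ * K + M)
      = Matrix.fromBlocks D 0 0 M
        + (Matrix.fromRows D K) * C⁻¹ * (Matrix.fromRows D K)ᴴ := by
    rw [Matrix.conjTranspose_fromRows_eq_fromCols_conjTranspose, hDsymm, hKsymm,
      Matrix.fromRows_mul, Matrix.fromRows_mul_fromCols, Matrix.fromBlocks_add]
    have h11 : D * C⁻¹ * Kρ = D + D * C⁻¹ * D := by
      have h1 : Kρ = C + D := by rw [hD]; abel
      rw [h1, mul_add]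
      have h2 : D * C⁻¹ * C = D := by
        letI := hCinv
        rw [mul_assoc, Matrix.inv_mul_of_invertible, mul_one]
      rw [h2]
    rw [h11, zero_add, zero_add, add_comm M]
  rw [key]
  exact (posDef_fromBlocks_diag hKρC hM).add_posSemidef
    (hC.inv.posSemidef.mul_mul_conjTranspose_same _)
end
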